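/- The characteristic of the induced S_n-module Ind_{C_n}^{S_n} χ_n equals (1/n) Σ_{d|n} μ(d) p_d^{n/d}, where χ_n is the character of the cyclic group C_n sending a fixed generator to e^{2πi/n}. -/

import Mathlib

/-!  The Frobenius characteristic of the induced module `Ind_{Cₙ}^{Sₙ} χₙ`, where
`Cₙ ⊆ Sₙ` is the cyclic subgroup generated by the `n`-cycle `finRotate n` and `χₙ`
sends this generator to `e^{2πi/n}`.  We work in `Λ_ℂ`, the ring of symmetric
functions over `ℂ` (polynomial ring on the power sums), using the standard formulas:
the Frobenius characteristic of a character `χ` of `Sₙ` is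
`ch(χ) = (1/n!) Σ_{g ∈ Sₙ} χ(g) p_{cycletype(g)}` (equivalently
`Σ_{|λ|=n} χ(O_λ) p_λ / z(λ)`), and the induced character is
`χ*(g) = (1/|Cₙ|) Σ_{x ∈ Sₙ} χ̇(x⁻¹ g x)` with `χ̇` extending `χₙ` by zero. -/

noncomputable section

open Equiv Complex

/-- The ring of symmetric functions over `ℂ`, as the polynomial ring on `p₁, p₂, …`. -/
abbrev SymmFnC : Type := MvPolynomial ℕ+ ℂ

/-- The power sum symmetric functions. -/
def pC (k : ℕ) : SymmFnC :=
  if h : 0 < k then MvPolynomial.X (⟨k, h⟩ : ℕ+) else 1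

/-- `p_λ` for the cycle type `λ` of a permutation (including its fixed points). -/
def pOf {n : ℕ} (g : Equiv.Perm (Fin n)) : SymmFnC :=
  (g.cycleType.map pC).prod * pC 1 ^ (n - g.cycleType.sum)

/-- The character `χₙ` of `Cₙ = ⟨finRotate n⟩`, extended by zero to `Sₙ`:
`χ̇(cᵏ) = e^{2πik/n}`. -/
def chiDot (n : ℕ) (g : Equiv.Perm (Fin n)) : ℂ :=
  ∑ k ∈ Finset.range n,
    if g = (finRotate n) ^ k then Complex.exp (2 * (Real.pi : ℂ) * I * k / n) else 0

/-- The induced character `Ind_{Cₙ}^{Sₙ} χₙ`: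
`χ*(g) = (1/|Cₙ|) Σ_{x ∈ Sₙ} χ̇(x⁻¹ g x)`. -/
def chiInd (n : ℕ) (g : Equiv.Perm (Fin n)) : ℂ :=
  ((n : ℂ))⁻¹ * ∑ x : Equiv.Perm (Fin n), chiDot n (x⁻¹ * g * x)

/-- The Frobenius characteristic `ch(χ) = (1/n!) Σ_{g ∈ Sₙ} χ(g) p_{cycletype(g)}`. -/
def chFrob (n : ℕ) (chi : Equiv.Perm (Fin n) → ℂ) : SymmFnC :=
  ((n.factorial : ℂ))⁻¹ • ∑ g : Equiv.Perm (Fin n), chi g • pOf g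

open Finset Fin.CommRing in
lemma finRotate_pow_apply {m : ℕ} (j : ℕ) (x : Fin (m+1)) :
    ((finRotate (m+1)) ^ j) x = x + (j : Fin (m+1)) := by
  induction j generalizing x with
  | zero => simp
  | succ j ih =>
    rw [pow_succ, Equiv.Perm.mul_apply, finRotate_succ_apply, ih]
    push_cast
    ring

open Fin.CommRing in
lemma finRotate_pow_apply_eq_self {m j : ℕ} {x : Fin (m+1)} :
    ((finRotate (m+1)) ^ j) x = x ↔ (m+1) ∣ j := by
  rw [finRotate_pow_apply, add_eq_left, Fin.natCast_eq_zero]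

open Fin.CommRing in
lemma finRotate_pow_eq_one {m j : ℕ} (h : (m+1) ∣ j) : (finRotate (m+1)) ^ j = 1 :=
  Equiv.ext fun x => by rw [finRotate_pow_apply, Fin.natCast_eq_zero.2 h, add_zero, Perm.one_apply]

lemma cycleType_finRotate_pow {m k : ℕ} (hk0 : 0 < k) (hkn : k < m+1) :
    ((finRotate (m+1)) ^ k).cycleType
      = Multiset.replicate ((m+1).gcd k) ((m+1) / (m+1).gcd k) := by
  set n := m + 1 with hn
  set g := n.gcd k with hg
  set d := n / g with hd
  have hn0 : 0 < n := Nat.succ_pos m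
  have hg0 : 0 < g := Nat.gcd_pos_of_pos_left k hn0
  have hgn : g ∣ n := Nat.gcd_dvd_left n k
  have hgk : g ∣ k := Nat.gcd_dvd_right n k
  have hd0 : 0 < d := Nat.div_pos (Nat.le_of_dvd hn0 hgn) hg0
  set σ := (finRotate n) ^ k with hσ
  have hndk : ¬ (n ∣ k) := Nat.not_dvd_of_pos_of_lt hk0 hkn
  have hsupp : σ.support = Finset.univ := by
    apply Finset.eq_univ_iff_forall.2
    intro x
    rw [Equiv.Perm.mem_support]
    intro h
    exact hndk (finRotate_pow_apply_eq_self.mp h)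
  have hσd : σ ^ d = 1 := by
    rw [hσ, ← pow_mul]
    refine finRotate_pow_eq_one ⟨k / g, ?_⟩
    show k * d = n * (k / g)
    rw [hd, ← Nat.mul_div_assoc k hgn, ← Nat.mul_div_assoc n hgk, mul_comm k n]
  have horder : orderOf σ ∣ d := orderOf_dvd_of_pow_eq_one hσd
  have hmem : ∀ ℓ ∈ σ.cycleType, ℓ = d := by
    intro ℓ hℓ
    have hld : ℓ ∣ d := by
      refine dvd_trans ?_ horder
      rw [← Equiv.Perm.lcm_cycleType]
      exact Multiset.dvd_lcm hℓ
    have hdl : d ∣ ℓ := by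
      rw [Equiv.Perm.cycleType_def, Multiset.mem_map] at hℓ
      obtain ⟨f, hf, hcard⟩ := hℓ
      have hfmem : f ∈ σ.cycleFactorsFinset := hf
      have hfc : f.IsCycle := (Equiv.Perm.mem_cycleFactorsFinset_iff.mp hfmem).1
      obtain ⟨x, hx⟩ : f.support.Nonempty := by
        rw [← Finset.card_pos]
        have := hfc.two_le_card_support
        omega
      have hfx : f = σ.cycleOf x := Equiv.Perm.cycle_is_cycleOf hx hfmem
      have h1 : (σ ^ ℓ) x = x := by
        rw [← Equiv.Perm.cycleOf_pow_apply_self σ x, ← hfx, ← hcard]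
        show (f ^ f.support.card) x = x
        rw [← hfc.orderOf, pow_orderOf_eq_one, Equiv.Perm.one_apply]
      have h2 : n ∣ k * ℓ := by
        rw [hσ, ← pow_mul] at h1
        exact finRotate_pow_apply_eq_self.mp h1
      have hco : Nat.Coprime d (k / g) := Nat.coprime_div_gcd_div_gcd hg0
      have h3 : d ∣ (k / g) * ℓ := by
        have h4 : g * d ∣ g * ((k / g) * ℓ) := by
          rw [Nat.mul_div_cancel' hgn, ← mul_assoc, Nat.mul_div_cancel' hgk]
          exact h2
        exact (mul_dvd_mul_iff_left hg0.ne').mp h4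
      exact hco.dvd_of_dvd_mul_left h3
    exact Nat.dvd_antisymm hld hdl
  have hrep : σ.cycleType = Multiset.replicate σ.cycleType.card d :=
    Multiset.eq_replicate_card.2 hmem
  have hsum : σ.cycleType.sum = n := by
    rw [Equiv.Perm.sum_cycleType, hsupp, Finset.card_univ, Fintype.card_fin]
  have hcardeq : σ.cycleType.card = g := by
    have : σ.cycleType.card * d = g * d := by
      have h5 : (Multiset.replicate σ.cycleType.card d).sum = n := by rw [← hrep]; exact hsum
      rw [Multiset.sum_replicate, smul_eq_mul] at h5
      rw [h5, Nat.mul_div_cancel' hgn]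
    exact Nat.eq_of_mul_eq_mul_right hd0 this
  rw [hrep, hcardeq]

lemma pOf_conj {n : ℕ} (x h : Equiv.Perm (Fin n)) : pOf (x * h * x⁻¹) = pOf h := by
  unfold pOf
  rw [Equiv.Perm.cycleType_conj]

lemma pOf_finRotate_pow {n k : ℕ} (hn : 0 < n) (hk : k < n) :
    pOf ((finRotate n) ^ k) = pC (n / n.gcd k) ^ (n.gcd k) := by
  obtain ⟨m, rfl⟩ := Nat.exists_eq_add_of_lt hn
  rw [zero_add] at *
  rcases Nat.eq_zero_or_pos k with rfl | hk0
  · rw [pow_zero, Nat.gcd_zero_right, Nat.div_self hn]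
    unfold pOf
    rw [Equiv.Perm.cycleType_one]
    simp
  · unfold pOf
    rw [cycleType_finRotate_pow hk0 hk, Multiset.map_replicate, Multiset.prod_replicate,
      Multiset.sum_replicate, smul_eq_mul, Nat.mul_div_cancel' (Nat.gcd_dvd_left _ k),
      Nat.sub_self, pow_zero, mul_one]

lemma sum_range_gcd {M : Type*} [AddCommMonoid M] (n : ℕ) (hn : 0 < n) (F : ℕ → ℕ → M) :
    ∑ k ∈ Finset.range n, F (n / n.gcd k) (k / n.gcd k)
      = ∑ d ∈ n.divisors, ∑ m ∈ (Finset.range d).filter (fun m => d.gcd m = 1), F d m := by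
  rw [Finset.sum_sigma']
  refine Finset.sum_nbij' (fun k => ⟨n / n.gcd k, k / n.gcd k⟩)
    (fun p => (n / p.1) * p.2) ?_ ?_ ?_ ?_ ?_
  · intro k hk
    rw [Finset.mem_range] at hk
    have hg0 : 0 < n.gcd k := Nat.gcd_pos_of_pos_left k hn
    rw [Finset.mem_sigma, Nat.mem_divisors, Finset.mem_filter, Finset.mem_range]
    exact ⟨⟨Nat.div_dvd_of_dvd (Nat.gcd_dvd_left n k), hn.ne'⟩,
      Nat.div_lt_div_of_lt_of_dvd (Nat.gcd_dvd_left n k) hk,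
      Nat.coprime_div_gcd_div_gcd hg0⟩
  · rintro ⟨d, m⟩ hp
    rw [Finset.mem_sigma, Nat.mem_divisors, Finset.mem_filter, Finset.mem_range] at hp
    obtain ⟨⟨hdn, -⟩, hm, -⟩ := hp
    dsimp only at hdn hm ⊢
    have hd0 : 0 < d := by omega
    have he0 : 0 < n / d := Nat.div_pos (Nat.le_of_dvd hn hdn) hd0
    rw [Finset.mem_range]
    calc n / d * m < n / d * d := by exact Nat.mul_lt_mul_of_le_of_lt (le_refl _) hm he0
      _ = n := Nat.div_mul_cancel hdn
  · intro k hk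
    dsimp only
    rw [Nat.div_div_self (Nat.gcd_dvd_left n k) hn.ne', Nat.mul_div_cancel' (Nat.gcd_dvd_right n k)]
  · rintro ⟨d, m⟩ hp
    rw [Finset.mem_sigma, Nat.mem_divisors, Finset.mem_filter, Finset.mem_range] at hp
    obtain ⟨⟨hdn, -⟩, hm, hco⟩ := hp
    dsimp only at hdn hm hco ⊢
    have hd0 : 0 < d := by omega
    have he0 : 0 < n / d := Nat.div_pos (Nat.le_of_dvd hn hdn) hd0
    have hgcd : n.gcd (n / d * m) = n / d := by
      calc n.gcd (n / d * m) = ((n / d) * d).gcd ((n / d) * m) := by rw [Nat.div_mul_cancel hdn]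
        _ = (n / d) * d.gcd m := Nat.gcd_mul_left _ _ _
        _ = n / d := by rw [hco, mul_one]
    rw [hgcd, Nat.div_div_self hdn hn.ne', Nat.mul_div_cancel_left m he0]
  · intro k hk
    rfl

lemma geom_roots (n : ℕ) (hn : 0 < n) :
    ∑ k ∈ Finset.range n, Complex.exp (2 * (Real.pi : ℂ) * I * k / n)
      = if n = 1 then 1 else 0 := by
  rcases eq_or_lt_of_le (Nat.one_le_iff_ne_zero.2 hn.ne') with h1 | h1
  · rw [← h1]
    simp
  · rw [if_neg (by omega)]
    set ζ : ℂ := Complex.exp (2 * (Real.pi : ℂ) * I / n) with hζ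
    have hterm : ∀ k : ℕ, Complex.exp (2 * (Real.pi : ℂ) * I * k / n) = ζ ^ k := by
      intro k
      rw [hζ, ← Complex.exp_nat_mul]
      congr 1
      ring
    have hne : ζ ≠ 1 := (Complex.isPrimitiveRoot_exp n hn.ne').ne_one h1
    have hpow : ζ ^ n = 1 := (Complex.isPrimitiveRoot_exp n hn.ne').pow_eq_one
    calc ∑ k ∈ Finset.range n, Complex.exp (2 * (Real.pi : ℂ) * I * k / n)
        = ∑ k ∈ Finset.range n, ζ ^ k := Finset.sum_congr rfl fun k _ => hterm k
      _ = (ζ ^ n - 1) / (ζ - 1) := geom_sum_eq hne n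
      _ = 0 := by rw [hpow, sub_self, zero_div]

lemma primsum (d : ℕ) (hd : 0 < d) :
    ∑ m ∈ (Finset.range d).filter (fun m => d.gcd m = 1),
        Complex.exp (2 * (Real.pi : ℂ) * I * m / d)
      = ((ArithmeticFunction.moebius d : ℤ) : ℂ) := by
  set f : ℕ → ℂ := fun e => ∑ m ∈ (Finset.range e).filter (fun m => e.gcd m = 1),
      Complex.exp (2 * (Real.pi : ℂ) * I * m / e) with hf
  set g : ℕ → ℂ := fun e => if e = 1 then 1 else 0 with hgdef
  have H : ∀ n > 0, ∑ i ∈ n.divisors, f i = g n := by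
    intro n hn
    have hre := (sum_range_gcd n hn
      (fun e m => Complex.exp (2 * (Real.pi : ℂ) * I * m / e))).symm
    show ∑ i ∈ n.divisors, f i = if n = 1 then 1 else 0
    rw [← geom_roots n hn]
    simp only [hf]
    rw [hre]
    refine Finset.sum_congr rfl fun k hk => ?_
    have hg0 : (0:ℕ) < n.gcd k := Nat.gcd_pos_of_pos_left k hn
    have c1 : ((k / n.gcd k : ℕ) : ℂ) * (n.gcd k : ℂ) = (k : ℂ) := by
      exact_mod_cast congrArg (Nat.cast : ℕ → ℂ) (Nat.div_mul_cancel (Nat.gcd_dvd_right n k))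
    have c2 : ((n / n.gcd k : ℕ) : ℂ) * (n.gcd k : ℂ) = (n : ℂ) := by
      exact_mod_cast congrArg (Nat.cast : ℕ → ℂ) (Nat.div_mul_cancel (Nat.gcd_dvd_left n k))
    have hng0 : ((n / n.gcd k : ℕ) : ℂ) ≠ 0 :=
      Nat.cast_ne_zero.2 (Nat.div_pos (Nat.le_of_dvd hn (Nat.gcd_dvd_left n k)) hg0).ne'
    have hn0' : ((n : ℕ) : ℂ) ≠ 0 := Nat.cast_ne_zero.2 hn.ne'
    congr 1
    rw [div_eq_div_iff hng0 hn0']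
    calc 2 * (Real.pi : ℂ) * I * ((k / n.gcd k : ℕ) : ℂ) * (n : ℂ)
        = 2 * (Real.pi : ℂ) * I * ((k / n.gcd k : ℕ) : ℂ)
            * (((n / n.gcd k : ℕ) : ℂ) * (n.gcd k : ℂ)) := by rw [c2]
      _ = 2 * (Real.pi : ℂ) * I * (((k / n.gcd k : ℕ) : ℂ) * (n.gcd k : ℂ))
            * ((n / n.gcd k : ℕ) : ℂ) := by ring
      _ = 2 * (Real.pi : ℂ) * I * (k : ℂ) * ((n / n.gcd k : ℕ) : ℂ) := by rw [c1]
  have hinv := (ArithmeticFunction.sum_eq_iff_sum_smul_moebius_eq.mp H) d hd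
  change f d = _
  rw [← hinv]
  rw [Finset.sum_eq_single_of_mem ((d, 1) : ℕ × ℕ)]
  · rw [hgdef]
    simp
  · rw [Nat.mem_divisorsAntidiagonal]
    exact ⟨mul_one d, hd.ne'⟩
  · rintro ⟨a, b⟩ hb hne
    rw [Nat.mem_divisorsAntidiagonal] at hb
    rw [hgdef]
    dsimp only
    rcases eq_or_ne b 1 with rfl | hb1
    · have had : a = d := by simpa using hb.1
      exact absurd (by rw [had]) hne
    · rw [if_neg hb1, smul_zero]

lemma exp_div_gcd (n k : ℕ) (hn : 0 < n) :
    Complex.exp (2 * (Real.pi : ℂ) * I * ((k / n.gcd k : ℕ) : ℂ) / ((n / n.gcd k : ℕ) : ℂ))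
      = Complex.exp (2 * (Real.pi : ℂ) * I * (k : ℂ) / (n : ℂ)) := by
  have hg0 : (0:ℕ) < n.gcd k := Nat.gcd_pos_of_pos_left k hn
  have c1 : ((k / n.gcd k : ℕ) : ℂ) * (n.gcd k : ℂ) = (k : ℂ) := by
    exact_mod_cast congrArg (Nat.cast : ℕ → ℂ) (Nat.div_mul_cancel (Nat.gcd_dvd_right n k))
  have c2 : ((n / n.gcd k : ℕ) : ℂ) * (n.gcd k : ℂ) = (n : ℂ) := by
    exact_mod_cast congrArg (Nat.cast : ℕ → ℂ) (Nat.div_mul_cancel (Nat.gcd_dvd_left n k))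
  have hng0 : ((n / n.gcd k : ℕ) : ℂ) ≠ 0 :=
    Nat.cast_ne_zero.2 (Nat.div_pos (Nat.le_of_dvd hn (Nat.gcd_dvd_left n k)) hg0).ne'
  have hn0' : ((n : ℕ) : ℂ) ≠ 0 := Nat.cast_ne_zero.2 hn.ne'
  congr 1
  rw [div_eq_div_iff hng0 hn0']
  calc 2 * (Real.pi : ℂ) * I * ((k / n.gcd k : ℕ) : ℂ) * (n : ℂ)
      = 2 * (Real.pi : ℂ) * I * ((k / n.gcd k : ℕ) : ℂ)
          * (((n / n.gcd k : ℕ) : ℂ) * (n.gcd k : ℂ)) := by rw [c2]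
    _ = 2 * (Real.pi : ℂ) * I * (((k / n.gcd k : ℕ) : ℂ) * (n.gcd k : ℂ))
          * ((n / n.gcd k : ℕ) : ℂ) := by ring
    _ = 2 * (Real.pi : ℂ) * I * (k : ℂ) * ((n / n.gcd k : ℕ) : ℂ) := by rw [c1]

/-- `ch(Ind_{Cₙ}^{Sₙ} χₙ) = (1/n) Σ_{d ∣ n} μ(d) p_d^{n/d}`. -/
theorem chFrob_ind_cyclic (n : ℕ) (hn : 1 ≤ n) :
    chFrob n (chiInd n) =
      ((n : ℂ))⁻¹ • ∑ d ∈ n.divisors,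
        (((ArithmeticFunction.moebius d : ℤ) : ℂ)) • pC d ^ (n / d) := by
  have hn0 : 0 < n := hn
  set T : SymmFnC := ∑ h : Equiv.Perm (Fin n), chiDot n h • pOf h with hT
  have step1 : chFrob n (chiInd n) = ((n : ℂ))⁻¹ • T := by
    unfold chFrob chiInd
    have h1 : ∀ g : Equiv.Perm (Fin n),
        (((n : ℂ))⁻¹ * ∑ x : Equiv.Perm (Fin n), chiDot n (x⁻¹ * g * x)) • pOf g
          = ((n : ℂ))⁻¹ • ∑ x : Equiv.Perm (Fin n), chiDot n (x⁻¹ * g * x) • pOf g := by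
      intro g
      rw [mul_smul, Finset.sum_smul]
    rw [Finset.sum_congr rfl fun g _ => h1 g, ← Finset.smul_sum, Finset.sum_comm]
    have h2 : ∀ x : Equiv.Perm (Fin n),
        ∑ g : Equiv.Perm (Fin n), chiDot n (x⁻¹ * g * x) • pOf g = T := by
      intro x
      refine (Fintype.sum_equiv ((Equiv.mulLeft x).trans (Equiv.mulRight x⁻¹))
        (fun h => chiDot n h • pOf h)
        (fun g => chiDot n (x⁻¹ * g * x) • pOf g) ?_).symm
      intro h
      have e1 : x⁻¹ * (x * h * x⁻¹) * x = h := by group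
      have e2 : (Equiv.mulLeft x).trans (Equiv.mulRight x⁻¹) h = x * h * x⁻¹ := rfl
      show chiDot n h • pOf h = chiDot n (x⁻¹ * ((Equiv.mulLeft x).trans (Equiv.mulRight x⁻¹) h) * x) • pOf ((Equiv.mulLeft x).trans (Equiv.mulRight x⁻¹) h)
      rw [e2, e1, pOf_conj]
    rw [Finset.sum_congr rfl fun x _ => h2 x, Finset.sum_const, Finset.card_univ,
      Fintype.card_perm, Fintype.card_fin, ← Nat.cast_smul_eq_nsmul ℂ,
      smul_comm ((n : ℂ))⁻¹ ((n.factorial : ℂ)), smul_smul ((n.factorial : ℂ))⁻¹,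
      inv_mul_cancel₀ (Nat.cast_ne_zero.2 n.factorial_ne_zero : (n.factorial : ℂ) ≠ 0), one_smul]
  have step2 : T = ∑ k ∈ Finset.range n,
      Complex.exp (2 * (Real.pi : ℂ) * I * k / n) • pOf ((finRotate n) ^ k) := by
    rw [hT]
    unfold chiDot
    simp_rw [Finset.sum_smul, ite_smul, zero_smul]
    rw [Finset.sum_comm]
    refine Finset.sum_congr rfl fun k _ => ?_
    rw [Finset.sum_ite_eq' Finset.univ ((finRotate n) ^ k)
      (fun h => Complex.exp (2 * (Real.pi : ℂ) * I * k / n) • pOf h), if_pos (Finset.mem_univ _)]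
  have step3 : ∑ k ∈ Finset.range n,
      Complex.exp (2 * (Real.pi : ℂ) * I * k / n) • pOf ((finRotate n) ^ k)
        = ∑ d ∈ n.divisors, (((ArithmeticFunction.moebius d : ℤ) : ℂ)) • pC d ^ (n / d) := by
    have hre := sum_range_gcd n hn0
      (fun d m => Complex.exp (2 * (Real.pi : ℂ) * I * m / d) • pC d ^ (n / d))
    calc ∑ k ∈ Finset.range n,
          Complex.exp (2 * (Real.pi : ℂ) * I * k / n) • pOf ((finRotate n) ^ k)
        = ∑ k ∈ Finset.range n,
            Complex.exp (2 * (Real.pi : ℂ) * I * ((k / n.gcd k : ℕ) : ℂ)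
              / ((n / n.gcd k : ℕ) : ℂ)) • pC (n / n.gcd k) ^ (n / (n / n.gcd k)) := by
          refine Finset.sum_congr rfl fun k hk => ?_
          rw [Finset.mem_range] at hk
          rw [exp_div_gcd n k hn0, pOf_finRotate_pow hn0 hk,
            Nat.div_div_self (Nat.gcd_dvd_left n k) hn0.ne']
      _ = ∑ d ∈ n.divisors, ∑ m ∈ (Finset.range d).filter (fun m => d.gcd m = 1),
            Complex.exp (2 * (Real.pi : ℂ) * I * m / d) • pC d ^ (n / d) := hre
      _ = ∑ d ∈ n.divisors, (((ArithmeticFunction.moebius d : ℤ) : ℂ)) • pC d ^ (n / d) := by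
          refine Finset.sum_congr rfl fun d hd => ?_
          rw [← Finset.sum_smul, primsum d (Nat.pos_of_mem_divisors hd)]
  rw [step1, step2, step3]

end
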